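/- Let (a_n)_{n≥1} be a strictly increasing sequence of positive integers with a_{n−1}/a_n → 0 as n → ∞ (where a₀ := 0), and let x : ℕ → {0,1} be a sequence that is constant on each block A_n := ℕ ∩ (a_{n−1}, a_n]. Then lim_{n→∞} ( x_{a_n} − (1/a_n) ∑_{i=1}^{a_n} x_i ) = 0. -/

import Mathlib

open Filter Set Topology

/-- if `(a_n)` is strictly increasing with `a₀ = 0` and
`a_n / a_{n+1} → 0`, and the `{0,1}`-valued sequence `x` is constant on each block
`A_n = ℕ ∩ (a_{n-1}, a_n]`, then `x_{a_n} − (1/a_n) ∑_{i=1}^{a_n} x_i → 0`. -/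
theorem stmt_19 (a : ℕ → ℕ) (ha0 : a 0 = 0) (hmono : StrictMono a)
    (hratio : Tendsto (fun n => (a n : ℝ) / (a (n + 1) : ℝ)) atTop (nhds 0))
    (x : ℕ → ℝ) (hx01 : ∀ n : ℕ, x n = 0 ∨ x n = 1)
    (hconst : ∀ n : ℕ, ∀ i j : ℕ, a n < i → i ≤ a (n + 1) → a n < j → j ≤ a (n + 1) →
      x i = x j) :
    Tendsto (fun n => x (a n) - (1 / (a n : ℝ)) * ∑ i ∈ Finset.Icc 1 (a n), x i)
      atTop (nhds 0) := by
  rw [← tendsto_add_atTop_iff_nat 1]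
  refine squeeze_zero_norm (a := fun n => (a n : ℝ) / (a (n + 1) : ℝ)) (fun n => ?_) hratio
  set m := a n with hm
  set M := a (n + 1) with hM
  have hmM : m < M := hmono (Nat.lt_succ_self n)
  have hMpos : (0 : ℝ) < M := by
    have : 0 < M := Nat.lt_of_le_of_lt (Nat.zero_le m) hmM
    exact_mod_cast this
  set S := ∑ i ∈ Finset.Icc 1 m, x i with hS
  have hsplit : ∑ i ∈ Finset.Icc 1 M, x i = S + (M - m : ℕ) * x M := by
    have h1 : Finset.Icc 1 M = Finset.Ioc 0 M := by rw [← Finset.Icc_add_one_left_eq_Ioc]; rfl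
    have h2 : Finset.Icc 1 m = Finset.Ioc 0 m := by rw [← Finset.Icc_add_one_left_eq_Ioc]; rfl
    rw [h1, ← Finset.sum_Ioc_consecutive x (Nat.zero_le m) (le_of_lt hmM), ← h2]
    congr 1
    rw [Finset.sum_congr rfl (fun i hi => hconst n i M (Finset.mem_Ioc.mp hi).1
      (Finset.mem_Ioc.mp hi).2 hmM le_rfl), Finset.sum_const, Nat.card_Ioc,
      nsmul_eq_mul]
  have hS0 : 0 ≤ S := Finset.sum_nonneg fun i _ => by rcases hx01 i with h | h <;> simp [h]
  have hSm : S ≤ (m : ℝ) := by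
    calc S ≤ ∑ i ∈ Finset.Icc 1 m, (1 : ℝ) :=
          Finset.sum_le_sum fun i _ => by rcases hx01 i with h | h <;> simp [h]
      _ = m := by simp [Nat.card_Icc]
  have hkey : x M - (1 / (M : ℝ)) * ∑ i ∈ Finset.Icc 1 M, x i
      = ((m : ℝ) * x M - S) / M := by
    rw [hsplit, Nat.cast_sub (le_of_lt hmM)]
    field_simp
    ring
  rw [hkey]
  rw [Real.norm_eq_abs, abs_div, abs_of_pos hMpos]
  show |(m : ℝ) * x M - S| / M ≤ (m : ℝ) / M
  gcongr
  · rw [abs_le]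
    have hm0 : (0 : ℝ) ≤ m := Nat.cast_nonneg m
    rcases hx01 M with h | h <;> constructor <;> simp [h] <;> linarith
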